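/- With λ, Δ, S, C, a, b, g̃, P_d as defined, for every t ∈ (0, Δ) the function P_d is differentiable at t with derivative P_d′(t) = λ·exp(λt)·∫_t^Δ g̃(τ)·exp(−λτ) dτ + λ·exp(λ(t−Δ))·∫_0^Δ g̃(τ)·exp(−λτ) dτ + λ·exp(λ(Δ−t))·∫_{Δ−t}^Δ g̃(τ)·exp(−λτ) dτ + (a + b)·λ·exp(−λ(Δ−t)) + b·λ·exp(−λ(2Δ−t)) + b·λ·exp(−λt). (This verifies that P_d is the cumulative distribution of the steady-state delay density p_d(t) = ∫_0^∞ [g(t+x) + g(t+x−Δ) + g(x−t+Δ)]·λe^{−λx} dx, written out for g = g̃ + a·δ_0 + b·δ_Δ.) -/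

import Mathlib

set_option maxHeartbeats 1000000

open Real Set MeasureTheory intervalIntegral

lemma int_eval (C lam : ℝ) (hlam : lam ≠ 0) (u v : ℝ) :
    (∫ τ in u..v, (C * Real.exp (lam * τ / 2)) * Real.exp (-(lam * τ))) =
      (2 * C / lam) * (Real.exp (-(lam * u) / 2) - Real.exp (-(lam * v) / 2)) := by
  have hderiv : ∀ τ ∈ Set.uIcc u v,
      HasDerivAt (fun τ => (-2 * C / lam) * Real.exp (-(lam * τ) / 2))
        ((C * Real.exp (lam * τ / 2)) * Real.exp (-(lam * τ))) τ := by
    intro τ _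
    have h1 : HasDerivAt (fun τ : ℝ => -(lam * τ) / 2) (-lam / 2) τ := by
      have h := (hasDerivAt_id τ).const_mul (-lam / 2)
      simp only [mul_one] at h
      simp only [id_eq] at h
      have hf : (fun τ : ℝ => -(lam * τ) / 2) = (fun x => -lam / 2 * x) := by funext x; ring
      rw [hf]; exact h
    have h2 := (h1.exp.const_mul (-2 * C / lam))
    have h3 : lam * τ / 2 + -(lam * τ) = -(lam * τ) / 2 := by ring
    refine h2.congr_deriv ?_; symm
    rw [mul_assoc, ← Real.exp_add, h3]
    field_simp
  rw [intervalIntegral.integral_eq_sub_of_hasDerivAt hderiv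
    ((Continuous.intervalIntegrable (by fun_prop) u v))]
  ring

lemma hasDerivAt_linear (a b x : ℝ) : HasDerivAt (fun x => a * x + b) a x := by
  simpa using ((hasDerivAt_id x).const_mul a).add_const b

theorem Pd_hasDerivAt
    (lam Δ S C a b : ℝ) (P : ℝ → ℝ) (hlam : 0 < lam) (hΔ : 0 < Δ)
    (hS : S = Real.exp (lam * Δ / 2) + Real.exp (-(lam * Δ) / 2) - 1)
    (hC : C = lam * (1 + Real.exp (-(lam * Δ))) / (8 * S))
    (ha : a = 2 * C / lam)
    (hb : b = 1 / 2 - (2 * Real.exp (lam * Δ / 2) / lam) * C)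
    (hP : ∀ t ∈ Set.Icc (0 : ℝ) Δ,
      P t = (4 * C / lam) *
          (Real.exp (lam * t / 2) - Real.exp (lam * (Δ - t) / 2) +
            Real.exp (lam * Δ / 2 - lam * t)) +
        (1 - Real.exp (-(lam * t))) / 2) :
    ∀ t ∈ Set.Ioo (0 : ℝ) Δ,
      HasDerivAt P
        ( lam * Real.exp (lam * t) *
            (∫ τ in t..Δ, (C * Real.exp (lam * τ / 2)) * Real.exp (-(lam * τ)))
        + lam * Real.exp (lam * (t - Δ)) *
            (∫ τ in (0 : ℝ)..Δ, (C * Real.exp (lam * τ / 2)) * Real.exp (-(lam * τ)))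
        + lam * Real.exp (lam * (Δ - t)) *
            (∫ τ in (Δ - t)..Δ, (C * Real.exp (lam * τ / 2)) * Real.exp (-(lam * τ)))
        + (a + b) * lam * Real.exp (-(lam * (Δ - t)))
        + b * lam * Real.exp (-(lam * (2 * Δ - t)))
        + b * lam * Real.exp (-(lam * t)) ) t := by
  intro t ht
  obtain ⟨ht0, htΔ⟩ := ht
  have hlam' : lam ≠ 0 := ne_of_gt hlam
  set u := Real.exp (lam * t / 2) with hu
  set w := Real.exp (lam * Δ / 2) with hw
  have hu0 : (0:ℝ) < u := Real.exp_pos _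
  have hw0 : (0:ℝ) < w := Real.exp_pos _
  have h2 : ∀ r : ℝ, Real.exp (2 * r) = (Real.exp r) ^ 2 := fun r => by
    rw [two_mul, Real.exp_add, sq]
  -- exp rewrites
  have e1 : Real.exp (lam * t) = u ^ 2 := by
    rw [hu, ← h2]; ring_nf
  have e2 : Real.exp (lam * (t - Δ)) = u ^ 2 / w ^ 2 := by
    rw [hu, hw, ← h2, ← h2, ← Real.exp_sub]; ring_nf
  have e3 : Real.exp (lam * (Δ - t)) = w ^ 2 / u ^ 2 := by
    rw [hu, hw, ← h2, ← h2, ← Real.exp_sub]; ring_nf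
  have e4 : Real.exp (-(lam * t) / 2) = 1 / u := by
    rw [hu, one_div, ← Real.exp_neg]; ring_nf
  have e5 : Real.exp (-(lam * Δ) / 2) = 1 / w := by
    rw [hw, one_div, ← Real.exp_neg]; ring_nf
  have e7 : Real.exp (-(lam * (Δ - t)) / 2) = u / w := by
    rw [hu, hw, ← Real.exp_sub]; ring_nf
  have e8 : Real.exp (-(lam * (Δ - t))) = u ^ 2 / w ^ 2 := by
    rw [hu, hw, ← h2, ← h2, ← Real.exp_sub]; ring_nf
  have e9 : Real.exp (-(lam * (2 * Δ - t))) = u ^ 2 / w ^ 4 := by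
    have h4 : ∀ r : ℝ, Real.exp (4 * r) = (Real.exp r) ^ 4 := fun r => by
      rw [show (4:ℝ) * r = r + r + r + r by ring, Real.exp_add, Real.exp_add, Real.exp_add]; ring
    rw [hu, hw, ← h2, ← h4, ← Real.exp_sub]; ring_nf
  have e10 : Real.exp (-(lam * t)) = 1 / u ^ 2 := by
    rw [hu, ← h2, one_div, ← Real.exp_neg]; ring_nf
  have e11 : Real.exp (lam * (Δ - t) / 2) = w / u := by
    rw [hu, hw, ← Real.exp_sub]; ring_nf
  have e12 : Real.exp (lam * Δ / 2 - lam * t) = w / u ^ 2 := by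
    rw [hu, hw, ← h2, ← Real.exp_sub]; ring_nf
  have e13 : Real.exp (-(lam * Δ)) = 1 / w ^ 2 := by
    rw [hw, ← h2, one_div, ← Real.exp_neg]; ring_nf
  -- key algebraic identity
  have hS0 : 0 < S := by
    rw [hS, e5]
    rw [hw] at hw0
    have hinv : w * (1 / w) = 1 := mul_one_div_cancel (by rw [hw]; positivity)
    nlinarith [sq_nonneg (w - 1), hw0, hinv, mul_pos hw0 (one_div_pos.2 hw0)]
  have hSne : S ≠ 0 := ne_of_gt hS0
  have hkey2 : 8 * C * S = lam * (1 + Real.exp (-(lam * Δ))) := by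
    rw [hC]; field_simp
  rw [hS, e5, e13] at hkey2
  field_simp at hkey2
  have hkey : 8 * C * (w ^ 3 + w - w ^ 2) = lam * (w ^ 2 + 1) :=
    mul_right_cancel₀ (ne_of_gt hw0)
      (show (8 * C * (w ^ 3 + w - w ^ 2)) * w = (lam * (w ^ 2 + 1)) * w by
        linear_combination w * hkey2)
  -- the derivative of the closed-form expression
  have hder : HasDerivAt (fun t => (4 * C / lam) *
          (Real.exp (lam * t / 2) - Real.exp (lam * (Δ - t) / 2) +
            Real.exp (lam * Δ / 2 - lam * t)) +
        (1 - Real.exp (-(lam * t))) / 2)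
      ((4 * C / lam) * ((lam / 2) * Real.exp (lam * t / 2)
          + (lam / 2) * Real.exp (lam * (Δ - t) / 2)
          - lam * Real.exp (lam * Δ / 2 - lam * t))
        + lam * Real.exp (-(lam * t)) / 2) t := by
    have d1 : HasDerivAt (fun t : ℝ => lam * t / 2) (lam / 2) t := by
      have h := hasDerivAt_linear (lam / 2) 0 t
      convert h using 2 with x <;> ring
    have d2 : HasDerivAt (fun t : ℝ => lam * (Δ - t) / 2) (-lam / 2) t := by
      have h := hasDerivAt_linear (-lam / 2) (lam * Δ / 2) t
      convert h using 2 with x <;> ring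
    have d3 : HasDerivAt (fun t : ℝ => lam * Δ / 2 - lam * t) (-lam) t := by
      have h := hasDerivAt_linear (-lam) (lam * Δ / 2) t
      convert h using 2 with x <;> ring
    have d4 : HasDerivAt (fun t : ℝ => -(lam * t)) (-lam) t := by
      have h := hasDerivAt_linear (-lam) 0 t
      convert h using 2 with x <;> ring
    have hmain := (((d1.exp.sub d2.exp).add d3.exp).const_mul (4 * C / lam)).add
      (((hasDerivAt_const t (1:ℝ)).sub d4.exp).div_const 2)
    refine hmain.congr_deriv ?_
    ring
  -- P agrees with the closed form near t
  have heq : P =ᶠ[nhds t] (fun t => (4 * C / lam) *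
          (Real.exp (lam * t / 2) - Real.exp (lam * (Δ - t) / 2) +
            Real.exp (lam * Δ / 2 - lam * t)) +
        (1 - Real.exp (-(lam * t))) / 2) := by
    filter_upwards [Ioo_mem_nhds ht0 htΔ] with x hx
    exact hP x ⟨le_of_lt hx.1, le_of_lt hx.2⟩
  have hderP := hder.congr_of_eventuallyEq heq
  refine hderP.congr_deriv ?_; symm
  rw [int_eval C lam hlam' t Δ, int_eval C lam hlam' 0 Δ, int_eval C lam hlam' (Δ - t) Δ]
  rw [e1, e2, e3, e4, e5, e7, e8, e9, e10, e11, e12, ha, hb]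
  rw [show -(lam * 0) / 2 = (0:ℝ) by ring, Real.exp_zero]
  rw [← hu]
  field_simp
  linear_combination (-u ^ 4) * hkey
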